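/- Let r, u, s ∈ ℝ with r < 0 and u > 0, and let c ∈ ℂ with |c|² = −r/(8u). Define Φ : ℤ/4 → ℂ by Φ(0) = c, Φ(1) = −c, Φ(2) = c, Φ(3) = −c. Then: (a) Φ satisfies r·Φ + 2u·‖Φ‖²·Φ + 2s·T²·conj(T)·𝟙 = 0, where ‖Φ‖² = Σ_k |Φ(k)|², T = Σ_k Φ(k), and 𝟙 is the constant function with value 1; and (b) Φ(k+2) = Φ(k) and Φ(−k) = Φ(k) for all k ∈ ℤ/4, i.e., Φ is invariant under the index shift by 2 and under index negation. -/

import Mathlib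

/-- the configuration `Φ = (c, −c, c, −c)` on `ℤ/4` with
`|c|² = −r/(8u)` solves the static Landau–Ginzburg equation
`r·Φ + 2u·‖Φ‖²·Φ + 2s·T²·conj(T)·𝟙 = 0`, and is invariant under the index
shift by `2` and under index negation. -/
theorem stmt15 (r u s : ℝ) (hr : r < 0) (hu : 0 < u) (c : ℂ)
    (hc : ‖c‖ ^ 2 = -r / (8 * u))
    (Φ : ZMod 4 → ℂ)
    (hΦ0 : Φ 0 = c) (hΦ1 : Φ 1 = -c) (hΦ2 : Φ 2 = c) (hΦ3 : Φ 3 = -c) :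
    -- (a) the static equation of motion
    (∀ k : ZMod 4,
      (r : ℂ) * Φ k
        + 2 * (u : ℂ) * (∑ j : ZMod 4, (‖Φ j‖ : ℂ) ^ 2) * Φ k
        + 2 * (s : ℂ) * (∑ j : ZMod 4, Φ j) ^ 2
            * (starRingEnd ℂ) (∑ j : ZMod 4, Φ j) * 1 = 0) ∧
    -- (b) invariance under shift by 2 and under negation of the index
    (∀ k : ZMod 4, Φ (k + 2) = Φ k) ∧ (∀ k : ZMod 4, Φ (-k) = Φ k) := by
  have expand : ∀ f : ZMod 4 → ℂ, (∑ j : ZMod 4, f j) = f 0 + f 1 + f 2 + f 3 := by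
    intro f
    exact Fin.sum_univ_four f
  have hT : (∑ j : ZMod 4, Φ j) = 0 := by
    rw [expand, hΦ0, hΦ1, hΦ2, hΦ3]; ring
  have hS : (∑ j : ZMod 4, (‖Φ j‖ : ℂ) ^ 2)
      = 4 * (‖c‖ : ℂ) ^ 2 := by
    rw [expand, hΦ0, hΦ1, hΦ2, hΦ3, norm_neg]; ring
  have hcoef : (r : ℂ) + 2 * (u : ℂ) * (4 * (‖c‖ : ℂ) ^ 2) = 0 := by
    have : (‖c‖ : ℂ) ^ 2 = (-r / (8 * u) : ℝ) := by
      push_cast [← hc]; norm_num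
    rw [this]
    have hu' : (u : ℂ) ≠ 0 := by exact_mod_cast hu.ne'
    push_cast
    field_simp
    ring
  refine ⟨?_, ?_, ?_⟩
  · intro k
    rw [hT, hS]
    have : (r : ℂ) * Φ k + 2 * (u : ℂ) * (4 * (‖c‖ : ℂ) ^ 2) * Φ k
        = ((r : ℂ) + 2 * (u : ℂ) * (4 * (‖c‖ : ℂ) ^ 2)) * Φ k := by ring
    simp [this, hcoef]
  · intro k
    have hk : k = 0 ∨ k = 1 ∨ k = 2 ∨ k = 3 := by revert k; decide
    rcases hk with rfl | rfl | rfl | rfl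
    · rw [show ((0:ZMod 4) + 2) = 2 by decide, hΦ2, hΦ0]
    · rw [show ((1:ZMod 4) + 2) = 3 by decide, hΦ3, hΦ1]
    · rw [show ((2:ZMod 4) + 2) = 0 by decide, hΦ0, hΦ2]
    · rw [show ((3:ZMod 4) + 2) = 1 by decide, hΦ1, hΦ3]
  · intro k
    have hk : k = 0 ∨ k = 1 ∨ k = 2 ∨ k = 3 := by revert k; decide
    rcases hk with rfl | rfl | rfl | rfl
    · rw [show (-(0:ZMod 4)) = 0 by decide]
    · rw [show (-(1:ZMod 4)) = 3 by decide, hΦ3, hΦ1]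
    · rw [show (-(2:ZMod 4)) = 2 by decide]
    · rw [show (-(3:ZMod 4)) = 1 by decide, hΦ1, hΦ3]
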